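/- Let t be a positive integer and let (x_1, y_1) and (x_2, y_2) be distinct solutions of the constrained inequality (2.1), both related to the same fourth root of unity ω, and suppose |ξ(x_2,y_2)| ≥ |ξ(x_1,y_1)|. Then |ξ(x_2,y_2)| > (3/π)·t^{−5/4}·|ξ(x_1,y_1)|^3. -/

import Mathlib

/-- The quartic form `P_t(x,y) = x^4 + 4t x^3 y - 6t x^2 y^2 - 4t^2 x y^3 + t^2 y^4`. -/
def Pquartic (t x y : ℤ) : ℤ :=
  x ^ 4 + 4 * t * x ^ 3 * y - 6 * t * x ^ 2 * y ^ 2 - 4 * t ^ 2 * x * y ^ 3 + t ^ 2 * y ^ 4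

/-- The resolvent form `ξ(x,y) = δ (x - i√t y)`. -/
noncomputable def xiForm (t : ℕ) (δ : ℂ) (x y : ℤ) : ℂ :=
  δ * ((x : ℂ) - Complex.I * (Real.sqrt t : ℂ) * (y : ℂ))

/-- The resolvent form `η(x,y) = ε (x + i√t y)`. -/
noncomputable def etaForm (t : ℕ) (ε : ℂ) (x y : ℤ) : ℂ :=
  ε * ((x : ℂ) + Complex.I * (Real.sqrt t : ℂ) * (y : ℂ))

/-- `(x,y)` is related to the fourth root of unity `ω` if
`|ω - η/ξ| < (π/12) |1 - (η/ξ)^4|`. -/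
noncomputable def RelatedTo (t : ℕ) (δ ε : ℂ) (x y : ℤ) (ω : ℂ) : Prop :=
  ‖ω - etaForm t ε x y / xiForm t δ x y‖ <
    Real.pi / 12 * ‖1 - (etaForm t ε x y / xiForm t δ x y) ^ 4‖

/-- A solution of the constrained inequality (2.1): coprime positive integers `x, y`
with `0 < P_t(x,y) ≤ t^2` and `x y > 64 t^3`. -/
def SolTwoOne (t : ℕ) (x y : ℤ) : Prop :=
  0 < x ∧ 0 < y ∧ IsCoprime x y ∧ 0 < Pquartic t x y ∧
    Pquartic t x y ≤ (t : ℤ) ^ 2 ∧ 64 * (t : ℤ) ^ 3 < x * y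

/-- Gap principle: two distinct solutions of (2.1) related to the same fourth root of
unity with `|ξ₂| ≥ |ξ₁|` satisfy `|ξ₂| > (3/π) t^(-5/4) |ξ₁|^3`. -/
theorem gap_principle (t : ℕ) (ht : 0 < t) (δ ε : ℂ)
    (hδ : δ ^ 4 = 4 * (Complex.I * (Real.sqrt t : ℂ) + 1))
    (hε : ε ^ 4 = 4 * (Complex.I * (Real.sqrt t : ℂ) - 1))
    (x₁ y₁ x₂ y₂ : ℤ)
    (h₁ : SolTwoOne t x₁ y₁) (h₂ : SolTwoOne t x₂ y₂)
    (hne : (x₁, y₁) ≠ (x₂, y₂))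
    (ω : ℂ) (hω : ω ∈ ({1, Complex.I, -1, -Complex.I} : Set ℂ))
    (hrel₁ : RelatedTo t δ ε x₁ y₁ ω) (hrel₂ : RelatedTo t δ ε x₂ y₂ ω)
    (hle : ‖xiForm t δ x₁ y₁‖ ≤ ‖xiForm t δ x₂ y₂‖) :
    3 / Real.pi * (t : ℝ) ^ (-(5 : ℝ) / 4) * ‖xiForm t δ x₁ y₁‖ ^ 3 <
      ‖xiForm t δ x₂ y₂‖ := by
  obtain ⟨hx₁, hy₁, hcop₁, hP₁pos, hP₁le, -⟩ := h₁
  obtain ⟨hx₂, hy₂, hcop₂, hP₂pos, hP₂le, -⟩ := h₂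
  have ht' : (0:ℝ) < (t:ℝ) := by exact_mod_cast ht
  have hπ : 0 < Real.pi := Real.pi_pos
  set s : ℝ := Real.sqrt t with hs
  have hs0 : 0 < s := Real.sqrt_pos.mpr ht'
  have hsq : s ^ 2 = (t:ℝ) := Real.sq_sqrt ht'.le
  -- key identity ξ⁴ - η⁴ = 8 P
  have key : ∀ x y : ℤ, xiForm t δ x y ^ 4 - etaForm t ε x y ^ 4
      = 8 * (Pquartic t x y : ℂ) := by
    intro x y
    have hsqC : ((t:ℕ):ℂ) = -(Complex.I * (s:ℂ))^2 := by
      rw [mul_pow, Complex.I_sq]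
      have h2 : ((s:ℝ):ℂ)^2 = ((t:ℕ):ℂ) := by norm_cast
      rw [h2]; ring
    unfold xiForm etaForm Pquartic
    push_cast
    rw [hsqC]
    linear_combination ((x:ℂ) - Complex.I*(s:ℂ)*(y:ℂ))^4 * hδ
      - ((x:ℂ) + Complex.I*(s:ℂ)*(y:ℂ))^4 * hε
  -- nonvanishing
  have hδ0 : δ ≠ 0 := by
    intro h; rw [h] at hδ
    have := congrArg Complex.re hδ
    simp [Complex.mul_re] at this
  have hε0 : ε ≠ 0 := by
    intro h; rw [h] at hε
    have := congrArg Complex.re hε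
    simp [Complex.mul_re] at this
  have hw : ∀ x y : ℤ, 0 < x → ((x:ℂ) - Complex.I*(s:ℂ)*(y:ℂ)) ≠ 0 := by
    intro x y hx h
    have := congrArg Complex.re h
    simp [Complex.mul_re] at this
    exact absurd this (by exact_mod_cast hx.ne')
  have hξ1 : xiForm t δ x₁ y₁ ≠ 0 := mul_ne_zero hδ0 (hw _ _ hx₁)
  have hξ2 : xiForm t δ x₂ y₂ ≠ 0 := mul_ne_zero hδ0 (hw _ _ hx₂)
  set A := ‖xiForm t δ x₁ y₁‖ with hA_def
  set B := ‖xiForm t δ x₂ y₂‖ with hB_def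
  have hA : 0 < A := norm_pos_iff.mpr hξ1
  have hB : 0 < B := norm_pos_iff.mpr hξ2
  -- z norms: ‖1 - r^4‖ * ‖ξ‖^4 = 8 P
  have hzn : ∀ x y : ℤ, xiForm t δ x y ≠ 0 → 0 < Pquartic t x y →
      ‖1 - (etaForm t ε x y / xiForm t δ x y)^4‖ * ‖xiForm t δ x y‖^4
        = 8 * ((Pquartic t x y : ℤ) : ℝ) := by
    intro x y hξ hP
    have e : 1 - (etaForm t ε x y / xiForm t δ x y)^4
        = 8*((Pquartic t x y : ℤ):ℂ)/(xiForm t δ x y)^4 := by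
      rw [← key x y]
      field_simp
    rw [e, norm_div, norm_pow, div_mul_cancel₀ _ (pow_ne_zero 4 (norm_ne_zero_iff.mpr hξ)), norm_mul]
    rw [Complex.norm_intCast, Complex.norm_ofNat]
    rw [abs_of_pos (by exact_mod_cast hP)]
  -- determinant nonzero
  have hdet : x₁ * y₂ - x₂ * y₁ ≠ 0 := by
    intro h
    have hxy : x₁ * y₂ = x₂ * y₁ := by linarith
    have h12 : x₁ ∣ x₂ := hcop₁.dvd_of_dvd_mul_right ⟨y₂, hxy.symm⟩
    have h21 : x₂ ∣ x₁ := hcop₂.dvd_of_dvd_mul_right ⟨y₁, hxy⟩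
    have hx : x₁ = x₂ := Int.dvd_antisymm hx₁.le hx₂.le h12 h21
    have hy : y₁ = y₂ := by
      have : x₁ * y₂ = x₁ * y₁ := by rw [hxy, hx]
      exact (mul_left_cancel₀ hx₁.ne' this).symm
    exact hne (by rw [hx, hy])
  -- cross-term identity
  have hD : xiForm t δ x₁ y₁ * etaForm t ε x₂ y₂ - xiForm t δ x₂ y₂ * etaForm t ε x₁ y₁
      = 2 * (Complex.I*(s:ℂ)) * δ * ε * ((x₁*y₂ - x₂*y₁ : ℤ):ℂ) := by
    unfold xiForm etaForm
    push_cast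
    ring
  -- lower bound for the cross term
  have hDlow : 2*s*‖δ‖*‖ε‖ ≤ ‖xiForm t δ x₁ y₁ * etaForm t ε x₂ y₂
      - xiForm t δ x₂ y₂ * etaForm t ε x₁ y₁‖ := by
    rw [hD]
    simp only [norm_mul, Complex.norm_I, Complex.norm_ofNat, Complex.norm_real,
      Complex.norm_intCast, one_mul]
    have h1 : (1:ℝ) ≤ |((x₁*y₂ - x₂*y₁ : ℤ):ℝ)| := by
      rw [← Int.cast_abs]
      exact_mod_cast Int.one_le_abs hdet
    have hsabs : ‖s‖ = s := abs_of_pos hs0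
    rw [hsabs]
    have h2 := mul_le_mul_of_nonneg_left h1 (show (0:ℝ) ≤ 2*s*‖δ‖*‖ε‖ by positivity)
    linarith
  -- upper bound for the cross term
  set r₁ := etaForm t ε x₁ y₁ / xiForm t δ x₁ y₁ with hr₁
  set r₂ := etaForm t ε x₂ y₂ / xiForm t δ x₂ y₂ with hr₂
  have hD2 : xiForm t δ x₁ y₁ * etaForm t ε x₂ y₂ - xiForm t δ x₂ y₂ * etaForm t ε x₁ y₁
      = xiForm t δ x₁ y₁ * xiForm t δ x₂ y₂ * ((ω - r₁) - (ω - r₂)) := by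
    rw [hr₁, hr₂]
    field_simp
    ring
  have hDup : ‖xiForm t δ x₁ y₁ * etaForm t ε x₂ y₂ - xiForm t δ x₂ y₂ * etaForm t ε x₁ y₁‖
      ≤ A * B * (‖ω - r₁‖ + ‖ω - r₂‖) := by
    rw [hD2, norm_mul, norm_mul]
    exact mul_le_mul_of_nonneg_left (norm_sub_le _ _) (by positivity)
  -- bounds on the μ's
  have hP₁R : ((Pquartic t x₁ y₁ : ℤ):ℝ) ≤ (t:ℝ)^2 := by exact_mod_cast hP₁le
  have hP₂R : ((Pquartic t x₂ y₂ : ℤ):ℝ) ≤ (t:ℝ)^2 := by exact_mod_cast hP₂le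
  have hz₁ : ‖1 - r₁^4‖ * A^4 ≤ 8 * (t:ℝ)^2 := by
    rw [hr₁, hzn x₁ y₁ hξ1 hP₁pos]; linarith
  have hz₂ : ‖1 - r₂^4‖ * B^4 ≤ 8 * (t:ℝ)^2 := by
    rw [hr₂, hzn x₂ y₂ hξ2 hP₂pos]; linarith
  have hu₁ : ‖ω - r₁‖ * A^4 < Real.pi/12 * (8 * (t:ℝ)^2) := by
    have := hrel₁
    unfold RelatedTo at this
    rw [← hr₁] at this
    calc ‖ω - r₁‖ * A^4 < (Real.pi/12 * ‖1 - r₁^4‖) * A^4 := by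
          apply mul_lt_mul_of_pos_right this (by positivity)
      _ = Real.pi/12 * (‖1 - r₁^4‖ * A^4) := by ring
      _ ≤ Real.pi/12 * (8 * (t:ℝ)^2) := by
          apply mul_le_mul_of_nonneg_left hz₁ (by positivity)
  have hu₂ : ‖ω - r₂‖ * A^4 < Real.pi/12 * (8 * (t:ℝ)^2) := by
    have h := hrel₂
    unfold RelatedTo at h
    rw [← hr₂] at h
    have hA4 : A^4 ≤ B^4 := by
      apply pow_le_pow_left₀ hA.le hle
    calc ‖ω - r₂‖ * A^4 ≤ ‖ω - r₂‖ * B^4 := by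
          apply mul_le_mul_of_nonneg_left hA4 (norm_nonneg _)
      _ < (Real.pi/12 * ‖1 - r₂^4‖) * B^4 := by
          apply mul_lt_mul_of_pos_right h (by positivity)
      _ = Real.pi/12 * (‖1 - r₂^4‖ * B^4) := by ring
      _ ≤ Real.pi/12 * (8 * (t:ℝ)^2) := by
          apply mul_le_mul_of_nonneg_left hz₂ (by positivity)
  -- norms of δ, ε from fourth powers
  have hδ4 : 4*s ≤ ‖δ‖^4 := by
    rw [← norm_pow, hδ, norm_mul, Complex.norm_ofNat]
    have him : |(Complex.I * (s:ℂ) + 1).im| ≤ ‖Complex.I * (s:ℂ) + 1‖ := Complex.abs_im_le_norm _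
    have : (Complex.I * (s:ℂ) + 1).im = s := by simp [Complex.mul_im]
    rw [this, abs_of_pos hs0] at him
    linarith
  have hε4 : 4*s ≤ ‖ε‖^4 := by
    rw [← norm_pow, hε, norm_mul, Complex.norm_ofNat]
    have him : |(Complex.I * (s:ℂ) - 1).im| ≤ ‖Complex.I * (s:ℂ) - 1‖ := Complex.abs_im_le_norm _
    have : (Complex.I * (s:ℂ) - 1).im = s := by simp [Complex.mul_im]
    rw [this, abs_of_pos hs0] at him
    linarith
  -- c = t^(3/4)
  set c : ℝ := (t:ℝ)^((3:ℝ)/4) with hc_def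
  have hc0 : 0 < c := Real.rpow_pos_of_pos ht' _
  have hc4 : c^4 = (t:ℝ)^3 := by
    rw [hc_def, ← Real.rpow_natCast ((t:ℝ)^((3:ℝ)/4)) 4, ← Real.rpow_mul ht'.le]
    norm_num
  have h4c : 4*c ≤ 2*s*‖δ‖*‖ε‖ := by
    have hpow : (4*c)^4 ≤ (2*s*‖δ‖*‖ε‖)^4 := by
      have e1 : (4*c)^4 = 256 * (t:ℝ)^3 := by rw [mul_pow, hc4]; norm_num
      have e2 : (2*s*‖δ‖*‖ε‖)^4 = 16 * (s^2)^2 * (‖δ‖^4 * ‖ε‖^4) := by ring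
      have e3 : (16:ℝ) * (s^2)^2 * ((4*s) * (4*s)) = 256 * (t:ℝ)^3 := by
        rw [← hsq]; ring
      have hmul : (4*s) * (4*s) ≤ ‖δ‖^4 * ‖ε‖^4 := by
        apply mul_le_mul hδ4 hε4 (by positivity) (by positivity)
      nlinarith [sq_nonneg s]
    have h1 : (0:ℝ) ≤ 4*c := by positivity
    have h2 : (0:ℝ) ≤ 2*s*‖δ‖*‖ε‖ := by positivity
    exact (pow_le_pow_iff_left₀ h1 h2 (by norm_num)).mp hpow
  -- combine
  have hchain : 4*c*A^4 < A * B * (Real.pi/12 * (16 * (t:ℝ)^2)) := by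
    have hD' : 2*s*‖δ‖*‖ε‖ ≤ A * B * (‖ω - r₁‖ + ‖ω - r₂‖) := le_trans hDlow hDup
    have h0 : 4*c ≤ A * B * (‖ω - r₁‖ + ‖ω - r₂‖) := le_trans h4c hD'
    have h1 : 4*c*A^4 ≤ A * B * ((‖ω - r₁‖ + ‖ω - r₂‖) * A^4) :=
      calc 4*c*A^4 ≤ (A * B * (‖ω - r₁‖ + ‖ω - r₂‖)) * A^4 :=
            mul_le_mul_of_nonneg_right h0 (by positivity)
        _ = A * B * ((‖ω - r₁‖ + ‖ω - r₂‖) * A^4) := by ring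
    have h2 : (‖ω - r₁‖ + ‖ω - r₂‖) * A^4 < Real.pi/12 * (16 * (t:ℝ)^2) := by
      have e : (‖ω - r₁‖ + ‖ω - r₂‖) * A^4 = ‖ω - r₁‖ * A^4 + ‖ω - r₂‖ * A^4 := by ring
      rw [e]; linarith
    calc 4*c*A^4 ≤ A * B * ((‖ω - r₁‖ + ‖ω - r₂‖) * A^4) := h1
      _ < A * B * (Real.pi/12 * (16 * (t:ℝ)^2)) := by
          apply mul_lt_mul_of_pos_left h2 (by positivity)
  -- now the final rearrangement
  have hmain : 3 * c * A^3 < Real.pi * (t:ℝ)^2 * B := by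
    have h3 : 3*c*A^3*A < Real.pi*(t:ℝ)^2*B*A := by linarith [hchain]
    exact lt_of_mul_lt_mul_right h3 hA.le
  have hrw : (t:ℝ)^(-(5:ℝ)/4) = c / (t:ℝ)^2 := by
    rw [hc_def, eq_div_iff (by positivity), ← Real.rpow_natCast (t:ℝ) 2,
        ← Real.rpow_add ht']
    norm_num
  rw [hrw]
  rw [show 3 / Real.pi * (c / (t:ℝ)^2) * A^3 = 3*c*A^3 / (Real.pi * (t:ℝ)^2) by ring]
  rw [div_lt_iff₀ (by positivity)]
  linarith [hmain]
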